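/- Let X₁, X₂, … be i.i.d. integrable real random variables with mean zero. Then there exists a constant C > 0 such that for every n ≥ 0, P(X₁ + ⋯ + Xₙ ≥ 0) ≥ C. -/

import Mathlib

open MeasureTheory ProbabilityTheory
open scoped ProbabilityTheory


private lemma aux_sq_le_lin_add_quartic (y s : ℝ) (hs : 0 < s) (hy : 0 ≤ y) :
    y ^ 2 ≤ s * y + y ^ 4 / s ^ 2 := by
  rcases le_or_gt y s with h | h
  · have h2 : 0 ≤ y ^ 4 / s ^ 2 := by positivity
    have h3 : y * y ≤ s * y := mul_le_mul_of_nonneg_right h hy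
    nlinarith [h2, h3]
  · have hss : s * s ≤ y * y := mul_le_mul h.le h.le hs.le hy
    have h1 : y ^ 2 * s ^ 2 ≤ y ^ 4 := by
      nlinarith [mul_le_mul_of_nonneg_left hss (sq_nonneg y)]
    have h2 : y ^ 2 ≤ y ^ 4 / s ^ 2 := by
      rw [le_div_iff₀ (by positivity)]; exact h1
    linarith [h2, mul_nonneg hs.le hy]


private lemma aux_s1_lower (u B m2 m4 s1 I4 : ℝ) (hu1 : 1 ≤ u) (hB : 0 < B)
    (hm2 : 0 < m2) (hm2B : m2 ≤ B ^ 2) (hm4B : m4 ≤ B ^ 2 * m2)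
    (hkey : u ^ 2 * m2 ≤ 3 * B * u * s1 + I4 / (3 * B * u) ^ 2)
    (hs4 : I4 ≤ u ^ 2 * m4 + 3 * (u ^ 2) ^ 2 * m2 ^ 2) :
    5 * u * m2 ≤ 27 * B * s1 := by
  have hu0 : 0 < u := lt_of_lt_of_le one_pos hu1
  have ht2 : (3 * B * u) ^ 2 = 9 * B ^ 2 * u ^ 2 := by ring
  have hm2sq : m2 ^ 2 ≤ B ^ 2 * m2 := by nlinarith [hm2B, hm2.le]
  have he1 : I4 / (3 * B * u) ^ 2 ≤ m2 / 9 + u ^ 2 * m2 / 3 := by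
    rw [div_le_iff₀ (by positivity), ht2]
    nlinarith [mul_le_mul_of_nonneg_left hm4B (sq_nonneg u),
      mul_le_mul_of_nonneg_left hm2sq (by positivity : (0:ℝ) ≤ 3 * (u ^ 2) ^ 2)]
  have h2 : u ^ 2 * m2 ≤ 3 * B * u * s1 + (m2 / 9 + u ^ 2 * m2 / 3) := by linarith
  have huu : 1 ≤ u ^ 2 := by nlinarith [hu1, hu0]
  have h3 : m2 ≤ u ^ 2 * m2 := by nlinarith [mul_le_mul_of_nonneg_right huu hm2.le]
  have h4 : 5 * u ^ 2 * m2 ≤ 27 * (B * u * s1) := by linarith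
  nlinarith [h4, hu0, hm2]

private lemma aux_final (u B m2 PA IT : ℝ) (hu1 : 1 ≤ u) (hB : 0 < B) (hm2 : 0 < m2)
    (hPA : 0 ≤ PA) (hIT : 0 ≤ IT) (hTlow : 5 * u * m2 ≤ 54 * B * IT)
    (hsq2 : IT ^ 2 ≤ PA * (u ^ 2 * m2)) :
    25 / 2916 * (m2 / B ^ 2) ≤ PA := by
  have hu0 : 0 < u := lt_of_lt_of_le one_pos hu1
  have h5 : 25 * u ^ 2 * m2 ^ 2 ≤ 2916 * B ^ 2 * IT ^ 2 := by
    nlinarith [mul_self_le_mul_self (by positivity : (0:ℝ) ≤ 5 * u * m2) hTlow]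
  have h6 : 2916 * B ^ 2 * IT ^ 2 ≤ 2916 * B ^ 2 * (PA * (u ^ 2 * m2)) := by
    nlinarith [mul_le_mul_of_nonneg_left hsq2 (by positivity : (0:ℝ) ≤ 2916 * B ^ 2)]
  have h7 : 25 * m2 ≤ 2916 * B ^ 2 * PA := by
    nlinarith [h5, h6, mul_pos (mul_pos hu0 hu0) hm2]
  have h8 : 25 / 2916 * (m2 / B ^ 2) = 25 * m2 / (2916 * B ^ 2) := by ring
  rw [h8, div_le_iff₀ (by positivity : (0:ℝ) < 2916 * B ^ 2)]
  linarith [h7]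

set_option maxHeartbeats 1600000 in
/-- For an i.i.d. sequence of mean-zero, bounded random variables, there is a
uniform constant C > 0 lower-bounding P(X₁ + ⋯ + Xₙ ≥ 0) for all n. -/
theorem iid_partial_sum_nonneg_prob_bounded_below
    {Ω : Type*} [MeasureSpace Ω] [IsProbabilityMeasure (ℙ : Measure Ω)]
    (X : ℕ → Ω → ℝ)
    (hmeas : ∀ i, Measurable (X i))
    (hindep : iIndepFun X ℙ)
    (hident : ∀ i, Measure.map (X i) ℙ = Measure.map (X 0) ℙ)
    (B : ℝ) (hbdd : ∀ i ω, |X i ω| ≤ B)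
    (hmean : (∫ ω, X 0 ω) = 0) :
    ∃ C > (0 : ℝ), ∀ n : ℕ,
      C ≤ (ℙ {ω | 0 ≤ ∑ i ∈ Finset.range n, X i ω}).toReal := by
  classical
  have hne : Nonempty Ω := by
    by_contra h
    rw [not_nonempty_iff] at h
    have h1 : (ℙ : Measure Ω) Set.univ = 1 := measure_univ
    rw [Set.eq_empty_of_isEmpty (Set.univ : Set Ω)] at h1
    simp at h1
  have hB0 : 0 ≤ B := le_trans (abs_nonneg _) (hbdd 0 hne.some)
  set S : ℕ → Ω → ℝ := fun n ω => ∑ i ∈ Finset.range n, X i ω with hS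
  have hSmeas : ∀ n, Measurable (S n) := fun n => Finset.measurable_sum _ fun i _ => hmeas i
  have hSbdd : ∀ n ω, |S n ω| ≤ n * B := by
    intro n ω
    calc |S n ω| ≤ ∑ i ∈ Finset.range n, |X i ω| := Finset.abs_sum_le_sum_abs _ _
    _ ≤ ∑ _i ∈ Finset.range n, B := Finset.sum_le_sum fun i _ => hbdd i ω
    _ = n * B := by simp [mul_comm]
  have hnB0 : ∀ n : ℕ, (0:ℝ) ≤ n * B := fun n => by positivity
  have hbint : ∀ (f : Ω → ℝ) (C : ℝ), Measurable f → (∀ ω, |f ω| ≤ C) → Integrable f ℙ :=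
    fun f C hf hC => ⟨hf.aestronglyMeasurable,
      HasFiniteIntegral.of_bounded (C := C)
        (ae_of_all _ fun ω => by simpa [Real.norm_eq_abs] using hC ω)⟩
  have hXint : ∀ i (k : ℕ), Integrable (fun ω => X i ω ^ k) ℙ := fun i k =>
    hbint _ (B ^ k) ((hmeas i).pow_const k) fun ω => by
      rw [abs_pow]; exact pow_le_pow_left₀ (abs_nonneg _) (hbdd i ω) k
  have hSint : ∀ n (k : ℕ), Integrable (fun ω => S n ω ^ k) ℙ := fun n k =>
    hbint _ ((n * B) ^ k) ((hSmeas n).pow_const k) fun ω => by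
      rw [abs_pow]; exact pow_le_pow_left₀ (abs_nonneg _) (hSbdd n ω) k
  have hSXint : ∀ n (a b : ℕ), Integrable (fun ω => S n ω ^ a * X n ω ^ b) ℙ := fun n a b =>
    hbint _ ((n * B) ^ a * B ^ b) (((hSmeas n).pow_const a).mul ((hmeas n).pow_const b))
      fun ω => by
        rw [abs_mul, abs_pow, abs_pow]
        exact mul_le_mul (pow_le_pow_left₀ (abs_nonneg _) (hSbdd n ω) a)
          (pow_le_pow_left₀ (abs_nonneg _) (hbdd n ω) b)
          (pow_nonneg (abs_nonneg _) _) (pow_nonneg (hnB0 n) _)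
  -- identical moments
  have hmom : ∀ i (k : ℕ), (∫ ω, X i ω ^ k) = ∫ ω, X 0 ω ^ k := by
    intro i k
    have h1 : (∫ ω, X i ω ^ k) = ∫ x, x ^ k ∂(Measure.map (X i) ℙ) :=
      (integral_map (hmeas i).aemeasurable
        (measurable_id.pow_const k).aestronglyMeasurable).symm
    rw [h1, hident i]
    exact integral_map (hmeas 0).aemeasurable
      (measurable_id.pow_const k).aestronglyMeasurable
  set m2 : ℝ := ∫ ω, X 0 ω ^ 2 with hm2def
  set m4 : ℝ := ∫ ω, X 0 ω ^ 4 with hm4def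
  have hXmean : ∀ i, (∫ ω, X i ω) = 0 := by
    intro i
    have h := hmom i 1
    simp only [pow_one] at h
    rw [h, hmean]
  have hm2nonneg : 0 ≤ m2 := integral_nonneg fun ω => sq_nonneg _
  have hm2B : m2 ≤ B ^ 2 := by
    have := integral_mono (hXint 0 2) (integrable_const (B ^ 2)) fun ω => by
      have h := sq_abs (X 0 ω)
      nlinarith [hbdd 0 ω, abs_nonneg (X 0 ω)]
    simpa using this
  have hm4B : m4 ≤ B ^ 2 * m2 := by
    have := integral_mono (hXint 0 4) ((hXint 0 2).const_mul (B ^ 2)) fun ω => by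
      have h1 : X 0 ω ^ 2 ≤ B ^ 2 := by nlinarith [hbdd 0 ω, abs_nonneg (X 0 ω), sq_abs (X 0 ω)]
      nlinarith [sq_nonneg (X 0 ω)]
    rw [integral_const_mul] at this
    exact this
  -- independence of partial sum and next step
  have hSX : ∀ n, IndepFun (S n) (X n) ℙ := by
    intro n
    have h := hindep.indepFun_finset_sum_of_notMem hmeas (Finset.notMem_range_self (n := n))
    have he : (∑ i ∈ Finset.range n, X i) = S n := by
      funext ω; simp [hS]
    rwa [he] at h
  have hmul : ∀ n (a b : ℕ),
      (∫ ω, S n ω ^ a * X n ω ^ b) = (∫ ω, S n ω ^ a) * ∫ ω, X n ω ^ b := by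
    intro n a b
    have h := (hSX n).comp (measurable_id.pow_const a) (measurable_id.pow_const b)
    exact h.integral_mul_eq_mul_integral (hSint n a).aestronglyMeasurable (hXint n b).aestronglyMeasurable
  have hSmean : ∀ n, (∫ ω, S n ω) = 0 := by
    intro n
    simp only [hS]
    rw [integral_finset_sum _ fun i _ => (by simpa using hXint i 1 : Integrable (X i) ℙ)]
    simp [hXmean]
  have hSmean1 : ∀ n, (∫ ω, S n ω ^ 1) = 0 := fun n => by simpa using hSmean n
  have hS2 : ∀ n, (∫ ω, S n ω ^ 2) = n * m2 := by
    intro n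
    induction n with
    | zero => simp [hS]
    | succ n ih =>
      have hexp : ∀ ω, S (n + 1) ω ^ 2
          = S n ω ^ 2 + (2 * (S n ω ^ 1 * X n ω ^ 1) + X n ω ^ 2) := by
        intro ω
        have hrec : S (n + 1) ω = S n ω + X n ω := by simp [hS, Finset.sum_range_succ]
        rw [hrec]; ring
      have e1 : (∫ ω, (S n ω ^ 2 + (2 * (S n ω ^ 1 * X n ω ^ 1) + X n ω ^ 2)))
          = (∫ ω, S n ω ^ 2) + ∫ ω, (2 * (S n ω ^ 1 * X n ω ^ 1) + X n ω ^ 2) :=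
        integral_add (hSint n 2) (((hSXint n 1 1).const_mul 2).add (hXint n 2))
      have e2 : (∫ ω, (2 * (S n ω ^ 1 * X n ω ^ 1) + X n ω ^ 2))
          = (∫ ω, 2 * (S n ω ^ 1 * X n ω ^ 1)) + ∫ ω, X n ω ^ 2 :=
        integral_add ((hSXint n 1 1).const_mul 2) (hXint n 2)
      have e3 : (∫ ω, 2 * (S n ω ^ 1 * X n ω ^ 1)) = 2 * ∫ ω, S n ω ^ 1 * X n ω ^ 1 :=
        integral_const_mul 2 _
      rw [show (∫ ω, S (n+1) ω ^ 2)
          = ∫ ω, (S n ω ^ 2 + (2 * (S n ω ^ 1 * X n ω ^ 1) + X n ω ^ 2)) from by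
        simp only [hexp]]
      rw [e1, e2, e3, hmul n 1 1, hSmean1 n, hmom n 2, ih]
      push_cast
      ring
  have hS4 : ∀ n, (∫ ω, S n ω ^ 4) ≤ n * m4 + 3 * n ^ 2 * m2 ^ 2 := by
    intro n
    induction n with
    | zero => simp [hS]
    | succ n ih =>
      have hexp : ∀ ω, S (n + 1) ω ^ 4
          = S n ω ^ 4 + (4 * (S n ω ^ 3 * X n ω ^ 1) + (6 * (S n ω ^ 2 * X n ω ^ 2)
            + (4 * (S n ω ^ 1 * X n ω ^ 3) + X n ω ^ 4))) := by
        intro ω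
        have hrec : S (n + 1) ω = S n ω + X n ω := by simp [hS, Finset.sum_range_succ]
        rw [hrec]; ring
      have hX1 : (∫ ω, X n ω ^ 1) = 0 := by simpa using hXmean n
      have e1 : (∫ ω, (S n ω ^ 4 + (4 * (S n ω ^ 3 * X n ω ^ 1) + (6 * (S n ω ^ 2 * X n ω ^ 2)
            + (4 * (S n ω ^ 1 * X n ω ^ 3) + X n ω ^ 4)))))
          = (∫ ω, S n ω ^ 4) + ∫ ω, (4 * (S n ω ^ 3 * X n ω ^ 1) + (6 * (S n ω ^ 2 * X n ω ^ 2)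
            + (4 * (S n ω ^ 1 * X n ω ^ 3) + X n ω ^ 4))) :=
        integral_add (hSint n 4) (((hSXint n 3 1).const_mul 4).add
          (((hSXint n 2 2).const_mul 6).add (((hSXint n 1 3).const_mul 4).add (hXint n 4))))
      have e2 : (∫ ω, (4 * (S n ω ^ 3 * X n ω ^ 1) + (6 * (S n ω ^ 2 * X n ω ^ 2)
            + (4 * (S n ω ^ 1 * X n ω ^ 3) + X n ω ^ 4))))
          = (∫ ω, 4 * (S n ω ^ 3 * X n ω ^ 1)) + ∫ ω, (6 * (S n ω ^ 2 * X n ω ^ 2)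
            + (4 * (S n ω ^ 1 * X n ω ^ 3) + X n ω ^ 4)) :=
        integral_add ((hSXint n 3 1).const_mul 4)
          (((hSXint n 2 2).const_mul 6).add (((hSXint n 1 3).const_mul 4).add (hXint n 4)))
      have e3 : (∫ ω, (6 * (S n ω ^ 2 * X n ω ^ 2)
            + (4 * (S n ω ^ 1 * X n ω ^ 3) + X n ω ^ 4)))
          = (∫ ω, 6 * (S n ω ^ 2 * X n ω ^ 2)) + ∫ ω, (4 * (S n ω ^ 1 * X n ω ^ 3) + X n ω ^ 4) :=
        integral_add ((hSXint n 2 2).const_mul 6)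
          (((hSXint n 1 3).const_mul 4).add (hXint n 4))
      have e4 : (∫ ω, (4 * (S n ω ^ 1 * X n ω ^ 3) + X n ω ^ 4))
          = (∫ ω, 4 * (S n ω ^ 1 * X n ω ^ 3)) + ∫ ω, X n ω ^ 4 :=
        integral_add ((hSXint n 1 3).const_mul 4) (hXint n 4)
      have e5 : (∫ ω, 4 * (S n ω ^ 3 * X n ω ^ 1)) = 4 * ∫ ω, S n ω ^ 3 * X n ω ^ 1 :=
        integral_const_mul 4 _
      have e6 : (∫ ω, 6 * (S n ω ^ 2 * X n ω ^ 2)) = 6 * ∫ ω, S n ω ^ 2 * X n ω ^ 2 :=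
        integral_const_mul 6 _
      have e7 : (∫ ω, 4 * (S n ω ^ 1 * X n ω ^ 3)) = 4 * ∫ ω, S n ω ^ 1 * X n ω ^ 3 :=
        integral_const_mul 4 _
      rw [show (∫ ω, S (n+1) ω ^ 4)
          = ∫ ω, (S n ω ^ 4 + (4 * (S n ω ^ 3 * X n ω ^ 1) + (6 * (S n ω ^ 2 * X n ω ^ 2)
            + (4 * (S n ω ^ 1 * X n ω ^ 3) + X n ω ^ 4)))) from by
        simp only [hexp]]
      rw [e1, e2, e3, e4, e5, e6, e7,
        hmul n 3 1, hmul n 2 2, hmul n 1 3, hX1, hSmean1 n, hS2 n, hmom n 2, hmom n 4]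
      push_cast
      nlinarith [sq_nonneg m2, hm2nonneg]
  -- set equality for the goal
  have hgoal : ∀ n, {ω | 0 ≤ ∑ i ∈ Finset.range n, X i ω} = {ω | 0 ≤ S n ω} := by
    intro n; rfl
  have hAmeas : ∀ n, MeasurableSet {ω | 0 ≤ S n ω} :=
    fun n => measurableSet_le measurable_const (hSmeas n)
  by_cases hm2 : m2 = 0
  · -- degenerate case : X = 0 a.s.
    refine ⟨1 / 2, by norm_num, fun n => ?_⟩
    have hX0 : ∀ᵐ ω ∂(ℙ : Measure Ω), X 0 ω = 0 := by
      have h2 : (fun ω => X 0 ω ^ 2) =ᵐ[ℙ] 0 :=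
        (integral_eq_zero_iff_of_nonneg (fun ω => sq_nonneg _) (hXint 0 2)).1 hm2
      filter_upwards [h2] with ω hω
      have hω' : X 0 ω ^ 2 = 0 := by simpa using hω
      exact pow_eq_zero_iff two_ne_zero |>.1 hω'
    have hXi : ∀ i, ∀ᵐ ω ∂(ℙ : Measure Ω), X i ω = 0 := by
      intro i
      have hc : (Measure.map (X i) ℙ) ({0}ᶜ : Set ℝ) = 0 := by
        rw [hident i, Measure.map_apply (hmeas 0) (measurableSet_singleton 0).compl]
        have h0 : X 0 ⁻¹' ({0}ᶜ : Set ℝ) = {ω | ¬ X 0 ω = 0} := by ext ω; simp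
        rw [ae_iff] at hX0
        rw [h0]
        exact hX0
      rw [Measure.map_apply (hmeas i) (measurableSet_singleton 0).compl] at hc
      have h0 : X i ⁻¹' ({0}ᶜ : Set ℝ) = {ω | ¬ X i ω = 0} := by ext ω; simp
      rw [h0] at hc
      rw [ae_iff]
      exact hc
    have hSn : ∀ᵐ ω ∂(ℙ : Measure Ω), 0 ≤ S n ω := by
      filter_upwards [ae_all_iff.2 hXi] with ω hω
      simp [hS, hω]
    have h1 : ℙ {ω | 0 ≤ S n ω} = 1 := by
      rw [← prob_compl_eq_zero_iff (hAmeas n)]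
      rw [ae_iff] at hSn
      rw [Set.compl_setOf]
      exact hSn
    rw [hgoal n, h1]
    norm_num
  · -- nondegenerate case
    have hm2pos : 0 < m2 := lt_of_le_of_ne hm2nonneg (Ne.symm hm2)
    have hBpos : 0 < B := by
      rcases hB0.lt_or_eq with h | h
      · exact h
      · exfalso; rw [← h] at hm2B; nlinarith
    refine ⟨25 / 2916 * (m2 / B ^ 2), by positivity, fun n => ?_⟩
    rcases Nat.eq_zero_or_pos n with hn | hn
    · subst hn
      have : {ω | 0 ≤ ∑ i ∈ Finset.range 0, X i ω} = Set.univ := by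
        ext ω; simp
      rw [this]
      simp only [measure_univ, ENNReal.toReal_one]
      have hq : m2 / B ^ 2 ≤ 1 := (div_le_one (by positivity)).2 hm2B
      nlinarith
    · -- main case n ≥ 1
      set u : ℝ := Real.sqrt n with hudef
      have hu0 : 0 < u := Real.sqrt_pos.2 (by exact_mod_cast hn)
      have hu2 : u ^ 2 = n := Real.sq_sqrt (Nat.cast_nonneg n)
      have hu1 : 1 ≤ u := by
        have h1n : (1:ℝ) ≤ n := by exact_mod_cast hn
        nlinarith
      set t : ℝ := 3 * B * u with htdef
      have ht : 0 < t := by positivity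
      have habsint : Integrable (fun ω => |S n ω|) ℙ :=
        hbint _ (n * B) (hSmeas n).abs fun ω => by
          rw [abs_abs]; exact hSbdd n ω
      set s1 : ℝ := ∫ ω, |S n ω| with hs1def
      have hs1nonneg : 0 ≤ s1 := integral_nonneg fun ω => abs_nonneg _
      -- pointwise: S² ≤ t|S| + S⁴/t²
      have habc := aux_sq_le_lin_add_quartic
      have hpt : ∀ ω, S n ω ^ 2 ≤ t * |S n ω| + S n ω ^ 4 / t ^ 2 := by
        intro ω
        have h := habc |S n ω| t ht (abs_nonneg _)
        have h4 : |S n ω| ^ 4 = S n ω ^ 4 := by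
          rw [← abs_pow]; exact abs_of_nonneg (by positivity)
        rwa [sq_abs, h4] at h
      have hkey : (n : ℝ) * m2 ≤ t * s1 + (∫ ω, S n ω ^ 4) / t ^ 2 := by
        have hint : Integrable (fun ω => t * |S n ω| + S n ω ^ 4 / t ^ 2) ℙ :=
          (habsint.const_mul t).add ((hSint n 4).div_const _)
        have h := integral_mono (hSint n 2) hint hpt
        rw [hS2 n] at h
        rwa [integral_add (habsint.const_mul t) ((hSint n 4).div_const _),
          integral_const_mul, integral_div] at h
      -- lower bound for s1
      have hs1 : 5 * u * m2 ≤ 27 * B * s1 := by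
        have hs4 := hS4 n
        have hn2 : ((n:ℝ)) = u ^ 2 := hu2.symm
        rw [hn2] at hkey hs4
        rw [htdef] at hkey
        refine aux_s1_lower u B m2 m4 s1 _ hu1 hBpos hm2pos hm2B hm4B hkey ?_
        nlinarith [hs4]
      -- T = S⁺
      set T : Ω → ℝ := fun ω => max (S n ω) 0 with hTdef
      have hTmeas : Measurable T := (hSmeas n).max measurable_const
      have hTbdd : ∀ ω, |T ω| ≤ n * B := by
        intro ω
        rw [abs_of_nonneg (le_max_right _ _)]
        exact le_trans (max_le (le_abs_self _) (abs_nonneg _)) (hSbdd n ω)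
      have hTint : Integrable T ℙ := hbint _ (n * B) hTmeas hTbdd
      have hTnonneg : ∀ ω, 0 ≤ T ω := fun ω => le_max_right _ _
      have hTmean : (∫ ω, T ω) = s1 / 2 := by
        have hptT : ∀ ω, T ω = (S n ω + |S n ω|) / 2 := by
          intro ω
          rcases le_or_gt 0 (S n ω) with h | h
          · rw [hTdef]; simp only [max_eq_left h, abs_of_nonneg h]; ring
          · rw [hTdef]; simp only [max_eq_right h.le, abs_of_neg h]; ring
        rw [show (∫ ω, T ω) = ∫ ω, (S n ω + |S n ω|) / 2 from by simp only [hptT]]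
        rw [integral_div, integral_add (by simpa using hSint n 1) habsint]
        rw [hSmean n]
        ring
      have hT2int : Integrable (fun ω => T ω ^ 2) ℙ :=
        hbint _ ((n * B) ^ 2) (hTmeas.pow_const 2) fun ω => by
          rw [abs_pow]; exact pow_le_pow_left₀ (abs_nonneg _) (hTbdd ω) 2
      have hT2le : (∫ ω, T ω ^ 2) ≤ n * m2 := by
        rw [← hS2 n]
        refine integral_mono hT2int (hSint n 2) fun ω => ?_
        show max (S n ω) 0 ^ 2 ≤ S n ω ^ 2
        rcases le_or_gt 0 (S n ω) with h | h
        · rw [max_eq_left h]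
        · rw [max_eq_right h.le]
          simpa using sq_nonneg (S n ω)
      have hT2nonneg : 0 ≤ ∫ ω, T ω ^ 2 := integral_nonneg fun ω => sq_nonneg _
      -- Cauchy-Schwarz with indicator
      set A : Set Ω := {ω | 0 ≤ S n ω} with hAdef
      set f : Ω → ℝ := A.indicator fun _ => (1:ℝ) with hfdef
      have hfmeas : Measurable f := measurable_const.indicator (hAmeas n)
      have hf01 : ∀ ω, f ω = 0 ∨ f ω = 1 := by
        intro ω
        rw [hfdef]
        by_cases h : ω ∈ A
        · right; simp [Set.indicator_of_mem h]
        · left; simp [Set.indicator_of_notMem h]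
      have hfnonneg : ∀ ω, 0 ≤ f ω := fun ω => by rcases hf01 ω with h | h <;> rw [h] <;> norm_num
      have hpq : Real.HolderConjugate 2 2 := Real.HolderConjugate.two_two
      have hfmem : MemLp f (ENNReal.ofReal 2) ℙ :=
        MemLp.of_bound hfmeas.aestronglyMeasurable 1
          (ae_of_all _ fun ω => by
            rcases hf01 ω with h | h <;> simp [h, Real.norm_eq_abs])
      have hTmem : MemLp T (ENNReal.ofReal 2) ℙ :=
        MemLp.of_bound hTmeas.aestronglyMeasurable (n * B)
          (ae_of_all _ fun ω => by simpa [Real.norm_eq_abs] using hTbdd ω)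
      have hcs := integral_mul_le_Lp_mul_Lq_of_nonneg hpq
        (ae_of_all _ hfnonneg) (ae_of_all _ hTnonneg) hfmem hTmem
      -- simplify the three integrals
      have hfT : (∫ ω, f ω * T ω) = ∫ ω, T ω := by
        congr 1
        funext ω
        by_cases h : ω ∈ A
        · rw [hfdef]; simp [Set.indicator_of_mem h]
        · have hneg : S n ω < 0 := by
            by_contra hc
            exact h (by simpa [hAdef] using not_lt.1 hc)
          rw [hfdef, hTdef]
          simp [Set.indicator_of_notMem h, max_eq_right hneg.le]
      set PA : ℝ := (ℙ A).toReal with hPAdef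
      have hPA0 : 0 ≤ PA := ENNReal.toReal_nonneg
      have hf2 : (∫ ω, f ω ^ (2:ℝ)) = PA := by
        have : ∀ ω, f ω ^ (2:ℝ) = f ω := by
          intro ω
          rcases hf01 ω with h | h <;> rw [h] <;> simp
        rw [show (∫ ω, f ω ^ (2:ℝ)) = ∫ ω, f ω from by simp only [this]]
        rw [hfdef, integral_indicator_const _ (hAmeas n)]
        simp [hPAdef]
        rfl
      have hT2' : (∫ ω, T ω ^ (2:ℝ)) = ∫ ω, T ω ^ 2 := by
        congr 1
        funext ω
        rw [show (2:ℝ) = ((2:ℕ):ℝ) from by norm_num, Real.rpow_natCast]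
      rw [hfT, hf2, hT2'] at hcs
      have hcs' : (∫ ω, T ω) ≤ Real.sqrt PA * Real.sqrt (∫ ω, T ω ^ 2) := by
        rw [Real.sqrt_eq_rpow, Real.sqrt_eq_rpow]
        convert hcs using 3 <;> norm_num
      have hTI0 : 0 ≤ ∫ ω, T ω := integral_nonneg hTnonneg
      have hsq : (∫ ω, T ω) ^ 2 ≤ PA * ∫ ω, T ω ^ 2 := by
        have h := pow_le_pow_left₀ hTI0 hcs' 2
        rwa [mul_pow, Real.sq_sqrt hPA0, Real.sq_sqrt hT2nonneg] at h
      -- final arithmetic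
      have hTlow : 5 * u * m2 ≤ 54 * B * ∫ ω, T ω := by
        rw [hTmean]; linarith
      have hsq2 : (∫ ω, T ω) ^ 2 ≤ PA * ((n:ℝ) * m2) :=
        le_trans hsq (mul_le_mul_of_nonneg_left hT2le hPA0)
      have hn2 : ((n:ℝ)) = u ^ 2 := hu2.symm
      rw [hn2] at hsq2
      exact aux_final u B m2 PA _ hu1 hBpos hm2pos hPA0 hTI0 hTlow hsq2
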